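/- arXiv:1501.05339 — 2 statements merged into one kernel-verified Lean document; each statement's English description precedes it below -/
import Mathlib

section
/- For the p-norm γ_p(x) = (Σ|x_i|^p)^{1/p} with p ≥ 2, and any x ≠ 0 and z ∈ ℝⁿ, the second directional derivative satisfies D²_{zz} γ_p(x) ≤ (p − 1) γ_p(z)² / γ_p(x) at points x where all coordinates are nonzero. -/
/-- The `p`-norm on `ℝⁿ`. -/
noncomputable def pNorm {n : ℕ} (p : ℝ) (x : Fin n → ℝ) : ℝ :=
  (∑ i, |x i| ^ p) ^ (1 / p)

private lemma abs_rpow_eq_sq (a q : ℝ) : |a| ^ q = (a ^ 2) ^ (q / 2) := by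
  rw [← sq_abs a, ← Real.rpow_natCast |a| 2, ← Real.rpow_mul (abs_nonneg a)]
  congr 1
  push_cast
  ring

/-- For `p ≥ 2` and `x` with all coordinates nonzero, the second directional derivative of the
`p`-norm satisfies `D²_{zz} γ_p(x) ≤ (p − 1) γ_p(z)² / γ_p(x)`. -/
theorem second_deriv_pNorm_le {n : ℕ} (p : ℝ) (hp : 2 ≤ p)
    (x z : Fin n → ℝ) (hx : ∀ i, x i ≠ 0) :
    deriv (deriv (fun t : ℝ => pNorm p (x + t • z))) 0 ≤
      (p - 1) * (pNorm p z) ^ 2 / pNorm p x := by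
  have hp0 : (0:ℝ) < p := by linarith
  have hp0' : p ≠ 0 := hp0.ne'
  set S : ℝ → ℝ := fun t => ∑ i, ((x i + t * z i) ^ 2) ^ (p / 2) with hSdef
  have hfun : (fun t : ℝ => pNorm p (x + t • z)) = fun t => S t ^ (1/p) := by
    funext t
    simp only [pNorm, hSdef]
    congr 1
    refine Finset.sum_congr rfl fun i _ => ?_
    simp [abs_rpow_eq_sq]
  rcases Nat.eq_zero_or_pos n with hn | hn
  · subst hn
    rw [hfun]
    have hco : (fun t : ℝ => S t ^ (1/p)) = fun _ => (0:ℝ) := by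
      funext t
      simp [hSdef, one_div, Real.zero_rpow (inv_ne_zero hp0')]
    rw [hco]
    simp [pNorm, one_div, Real.zero_rpow (inv_ne_zero hp0')]
  haveI : Nonempty (Fin n) := Fin.pos_iff_nonempty.mp hn
  -- positivity of S
  have hSpos : ∀ t, (∀ i, x i + t * z i ≠ 0) → 0 < S t := by
    intro t ht
    refine Finset.sum_pos (fun i _ => ?_) Finset.univ_nonempty
    exact Real.rpow_pos_of_pos (sq_pos_of_ne_zero (ht i)) _
  set U : Set ℝ := {t : ℝ | ∀ i, x i + t * z i ≠ 0} with hUdef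
  have hU : IsOpen U := by
    have : U = ⋂ i, (fun t => x i + t * z i) ⁻¹' {(0:ℝ)}ᶜ := by
      ext t; simp [hUdef, Set.mem_iInter]
    rw [this]
    exact isOpen_iInter_of_finite fun i =>
      (isOpen_compl_singleton).preimage (by continuity)
  have h0U : (0:ℝ) ∈ U := by
    intro i; simpa using hx i
  set D : ℝ → ℝ := fun t => ∑ i, ((x i + t * z i) ^ 2) ^ ((p - 2) / 2) * (x i + t * z i) * z i
    with hDdef
  -- derivative of each coordinate
  have hu : ∀ (i : Fin n) (t : ℝ), HasDerivAt (fun s : ℝ => x i + s * z i) (z i) t := by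
    intro i t
    simpa using ((hasDerivAt_id t).mul_const (z i)).const_add (x i)
  have hSderiv : ∀ t, HasDerivAt S (p * D t) t := by
    intro t
    have h : HasDerivAt S
        (∑ i, p * (((x i + t * z i) ^ 2) ^ ((p - 2) / 2) * (x i + t * z i) * z i)) t := by
      apply HasDerivAt.fun_sum
      intro i _
      have h2 := (hu i t).pow 2
      have h3 := h2.rpow_const (p := p/2) (Or.inr (by linarith : (1:ℝ) ≤ p/2))
      refine h3.congr_deriv ?_
      simp only [Pi.pow_apply]
      have he : p / 2 - 1 = (p - 2) / 2 := by ring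
      rw [he]
      ring
    simpa [hDdef, Finset.mul_sum] using h
  have hFderiv : ∀ t ∈ U, HasDerivAt (fun s => S s ^ (1/p)) (S t ^ (1/p - 1) * D t) t := by
    intro t ht
    have h := (hSderiv t).rpow_const (p := 1/p) (Or.inl (hSpos t ht).ne')
    convert h using 1
    field_simp
  have hev : deriv (fun s => S s ^ (1/p)) =ᶠ[nhds (0:ℝ)] fun t => S t ^ (1/p - 1) * D t := by
    filter_upwards [hU.mem_nhds h0U] with t ht
    exact (hFderiv t ht).deriv
  rw [hfun, hev.deriv_eq]
  have hS0pos : 0 < S 0 := hSpos 0 h0U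
  -- second derivative pieces
  set W : ℝ := ∑ i, ((x i) ^ 2) ^ ((p - 2) / 2) * (z i) ^ 2 with hWdef
  have hDderiv : HasDerivAt D ((p - 1) * W) 0 := by
    have h : HasDerivAt D
        (∑ i, (p - 1) * (((x i) ^ 2) ^ ((p - 2) / 2) * (z i) ^ 2)) 0 := by
      apply HasDerivAt.fun_sum
      intro i _
      have h1 := hu i 0
      have h2 := h1.pow 2
      have hx2 : (0:ℝ) < (x i) ^ 2 := sq_pos_of_ne_zero (hx i)
      have h3 := h2.rpow_const (p := (p-2)/2) (Or.inl (by simpa using hx2.ne'))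
      have h4 := (h3.mul h1).mul_const (z i)
      refine h4.congr_deriv ?_
      symm
      simp only [Pi.pow_apply]
      simp only [zero_mul, add_zero] at *
      have key : ((x i) ^ 2) ^ ((p - 2) / 2 - 1) * ((x i) ^ 2) = ((x i) ^ 2) ^ ((p - 2) / 2) := by
        calc ((x i) ^ 2) ^ ((p - 2) / 2 - 1) * ((x i) ^ 2)
            = ((x i) ^ 2) ^ ((p - 2) / 2 - 1) * ((x i) ^ 2) ^ (1:ℝ) := by rw [Real.rpow_one]
          _ = ((x i) ^ 2) ^ ((p - 2) / 2 - 1 + 1) := (Real.rpow_add hx2 _ _).symm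
          _ = ((x i) ^ 2) ^ ((p - 2) / 2) := by norm_num
      calc (p - 1) * (((x i) ^ 2) ^ ((p - 2) / 2) * (z i) ^ 2)
          = ((p - 2) * (((x i) ^ 2) ^ ((p - 2) / 2 - 1) * ((x i) ^ 2)) +
              ((x i) ^ 2) ^ ((p - 2) / 2)) * (z i) ^ 2 := by rw [key]; ring
        _ = (2 * x i ^ 1 * z i * ((p - 2) / 2) * (x i ^ 2) ^ ((p - 2) / 2 - 1) * x i +
              (x i ^ 2) ^ ((p - 2) / 2) * z i) * z i := by ring
    simpa [hWdef, Finset.mul_sum] using h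
  have hSp := (hSderiv 0).rpow_const (p := 1/p - 1) (Or.inl hS0pos.ne')
  have hG := hSp.fun_mul hDderiv
  rw [hG.deriv]
  -- now bound the value
  set A := S 0 ^ (1/p - 1 - 1) with hAdef
  have hApos : 0 < A := Real.rpow_pos_of_pos hS0pos _
  have hfirst : p * D 0 * (1/p - 1) * A * D 0 ≤ 0 := by
    have heq : p * D 0 * (1/p - 1) * A * D 0 = (1 - p) * (A * (D 0) ^ 2) := by
      field_simp
    rw [heq]
    apply mul_nonpos_of_nonpos_of_nonneg (by linarith)
    positivity
  have hstep1 : p * D 0 * (1/p - 1) * A * D 0 + S 0 ^ (1/p - 1) * ((p - 1) * W)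
      ≤ S 0 ^ (1/p - 1) * ((p - 1) * W) := by linarith
  refine le_trans hstep1 ?_
  -- Hölder step
  set Z : ℝ := ∑ i, ((z i) ^ 2) ^ (p / 2) with hZdef
  have hZnn : 0 ≤ Z := Finset.sum_nonneg fun i _ => Real.rpow_nonneg (by positivity) _
  have hWle : W ≤ S 0 ^ ((p - 2) / p) * Z ^ (2 / p) := by
    rcases eq_or_lt_of_le hp with hp2 | hp2
    · rw [hWdef, hSdef, hZdef, ← hp2]
      norm_num
    · have hpm2 : (0:ℝ) < p - 2 := by linarith
      have hconj : Real.HolderConjugate (p / (p - 2)) (p / 2) := by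
        refine Real.holderConjugate_iff.mpr ⟨?_, ?_⟩
        · rw [lt_div_iff₀ hpm2]; linarith
        · field_simp; ring
      have hH := Real.inner_le_Lp_mul_Lq_of_nonneg (s := Finset.univ) hconj
        (f := fun i => ((x i) ^ 2) ^ ((p - 2) / 2)) (g := fun i => (z i) ^ 2)
        (fun i _ => Real.rpow_nonneg (by positivity) _) (fun i _ => by positivity)
      have hf : ∀ i : Fin n, (((x i) ^ 2) ^ ((p - 2) / 2)) ^ (p / (p - 2))
          = ((x i) ^ 2) ^ (p / 2) := by
        intro i
        rw [← Real.rpow_mul (by positivity)]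
        congr 1
        field_simp
      have h1a : (1:ℝ) / (p / (p - 2)) = (p - 2) / p := one_div_div _ _
      have h1b : (1:ℝ) / (p / 2) = 2 / p := one_div_div _ _
      calc W ≤ (∑ i, (((x i) ^ 2) ^ ((p - 2) / 2)) ^ (p / (p - 2))) ^ (1 / (p / (p - 2))) *
            (∑ i, ((z i) ^ 2) ^ (p / 2)) ^ (1 / (p / 2)) := hH
        _ = S 0 ^ ((p - 2) / p) * Z ^ (2 / p) := by
            have hSsum : S 0 = ∑ i, ((x i) ^ 2) ^ (p / 2) := by simp [hSdef]
            rw [h1a, h1b, hSsum]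
            congr 2
            exact Finset.sum_congr rfl fun i _ => hf i
  -- convert RHS
  have hpx : pNorm p x = S 0 ^ (1/p) := by
    simp [pNorm, hSdef, abs_rpow_eq_sq]
  have hpz : pNorm p z = Z ^ (1/p) := by
    simp [pNorm, hZdef, abs_rpow_eq_sq]
  have hpz2 : (pNorm p z) ^ 2 = Z ^ (2/p) := by
    rw [hpz, ← Real.rpow_natCast (Z ^ (1/p)) 2, ← Real.rpow_mul hZnn]
    congr 1
    push_cast
    ring
  rw [hpx, hpz2]
  have hchain : S 0 ^ (1/p - 1) * ((p - 1) * W)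
      ≤ S 0 ^ (1/p - 1) * ((p - 1) * (S 0 ^ ((p - 2) / p) * Z ^ (2 / p))) := by
    apply mul_le_mul_of_nonneg_left _ (Real.rpow_nonneg hS0pos.le _)
    apply mul_le_mul_of_nonneg_left hWle (by linarith)
  refine le_trans hchain (le_of_eq ?_)
  have hee : S 0 ^ (1/p - 1) * S 0 ^ ((p - 2) / p) = (S 0 ^ (1/p))⁻¹ := by
    rw [← Real.rpow_add hS0pos]
    have : 1/p - 1 + (p - 2)/p = -(1/p) := by field_simp; ring
    rw [this, Real.rpow_neg hS0pos.le]
  calc S 0 ^ (1/p - 1) * ((p - 1) * (S 0 ^ ((p - 2) / p) * Z ^ (2 / p)))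
      = (S 0 ^ (1/p - 1) * S 0 ^ ((p - 2) / p)) * ((p - 1) * Z ^ (2 / p)) := by ring
    _ = (p - 1) * Z ^ (2/p) / S 0 ^ (1/p) := by rw [hee]; ring
end

section
/- For the p-norm γ_p with p ≥ 2, if γ_p(z) = 1 and 0 < h < γ_p(x), then the second difference quotient satisfies (γ_p(x + hz) + γ_p(x − hz) − 2γ_p(x)) / h² ≤ 2(p − 1)/(γ_p(x) − h). -/
set_option maxHeartbeats 1000000

open Real Filter Topology

section Aux

lemma abs_rpow_eq_sq_s9 (s p : ℝ) : |s| ^ p = (s ^ 2) ^ (p / 2) := by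
  rw [← sq_abs s, ← Real.rpow_natCast |s| 2, ← Real.rpow_mul (abs_nonneg s)]
  congr 1
  ring

lemma hasDerivAt_A {p : ℝ} (hp : 2 ≤ p) (s : ℝ) :
    HasDerivAt (fun s : ℝ => (s ^ 2) ^ (p / 2))
      (p * (s * (s ^ 2) ^ ((p - 2) / 2))) s := by
  have h1 : HasDerivAt (fun s : ℝ => s ^ 2) (2 * s) s := by
    simpa [mul_comm] using hasDerivAt_pow 2 s
  have h2 := h1.rpow_const (p := p / 2) (Or.inr (by linarith))
  have he : p / 2 - 1 = (p - 2) / 2 := by ring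
  rw [he] at h2
  convert h2 using 1
  ring

lemma hasDerivAt_B {p : ℝ} (hp : 2 ≤ p) (s : ℝ) :
    HasDerivAt (fun s : ℝ => s * (s ^ 2) ^ ((p - 2) / 2))
      ((p - 1) * (s ^ 2) ^ ((p - 2) / 2)) s := by
  rcases eq_or_lt_of_le hp with hp2 | hp2
  · subst hp2
    have he : ((2:ℝ) - 2) / 2 = 0 := by norm_num
    simp only [he, Real.rpow_zero, mul_one]
    norm_num
    exact hasDerivAt_id s
  rcases eq_or_ne s 0 with rfl | hs
  · have hq : 0 < (p - 2) / 2 := by linarith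
    have hz : ((0:ℝ) ^ 2) ^ ((p - 2) / 2) = 0 := by
      rw [zero_pow (by norm_num), Real.zero_rpow (ne_of_gt hq)]
    rw [hz, mul_zero]
    rw [hasDerivAt_iff_tendsto_slope]
    have hc : ContinuousAt (fun y : ℝ => y ^ ((p - 2) / 2)) 0 := by
      exact Real.continuousAt_rpow_const ((0:ℝ)) ((p - 2) / 2) (Or.inr (le_of_lt hq))
    have ht : Tendsto (fun s : ℝ => (s ^ 2) ^ ((p - 2) / 2)) (𝓝[≠] (0:ℝ)) (𝓝 0) := by
      have h2t : Tendsto (fun s : ℝ => s ^ 2) (𝓝 (0:ℝ)) (𝓝 0) := by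
        simpa using (continuous_pow 2).tendsto (0:ℝ)
      have hcomp := (hc.tendsto).comp h2t
      simp only [Function.comp_def, Real.zero_rpow (ne_of_gt hq)] at hcomp
      exact hcomp.mono_left nhdsWithin_le_nhds
    refine ht.congr' ?_
    filter_upwards [self_mem_nhdsWithin] with s hs
    have hs' : s ≠ 0 := hs
    simp only [slope_def_field, zero_pow, Real.zero_rpow (ne_of_gt hq), mul_zero,
      zero_mul, sub_zero]
    rw [mul_comm, mul_div_assoc, div_self hs', mul_one]
  · have h1 : HasDerivAt (fun s : ℝ => (s ^ 2) ^ ((p - 2) / 2))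
        (2 * s * ((p - 2) / 2) * (s ^ 2) ^ ((p - 2) / 2 - 1)) s := by
      have hsq : HasDerivAt (fun s : ℝ => s ^ 2) (2 * s) s := by
        simpa [mul_comm] using hasDerivAt_pow 2 s
      simpa [mul_comm, mul_assoc, mul_left_comm] using
        hsq.rpow_const (p := (p - 2) / 2) (Or.inl (pow_ne_zero 2 hs))
    have h2 := (hasDerivAt_id s).mul h1
    simp only [id_eq, Pi.mul_def] at h2
    refine h2.congr_deriv ?_
    have hpos : (0:ℝ) < s ^ 2 := by positivity
    have key : (s ^ 2) ^ ((p - 2) / 2 - 1) * s ^ 2 = (s ^ 2) ^ ((p - 2) / 2) := by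
      rw [Real.rpow_sub hpos, Real.rpow_one, div_mul_cancel₀]
      exact ne_of_gt hpos
    linear_combination (p - 2) * key

lemma pNorm_add_le {n : ℕ} {p : ℝ} (hp1 : 1 ≤ p) (a b : Fin n → ℝ) :
    pNorm p (a + b) ≤ pNorm p a + pNorm p b := by
  simpa [pNorm] using Real.Lp_add_le Finset.univ a b hp1

lemma pNorm_smul {n : ℕ} {p : ℝ} (hp : 0 < p) (c : ℝ) (z : Fin n → ℝ) :
    pNorm p (c • z) = |c| * pNorm p z := by
  unfold pNorm
  have h1 : ∀ i, |(c • z) i| ^ p = |c| ^ p * |z i| ^ p := fun i => by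
    simp only [Pi.smul_apply, smul_eq_mul, abs_mul]
    exact Real.mul_rpow (abs_nonneg c) (abs_nonneg (z i))
  simp_rw [h1, ← Finset.mul_sum]
  rw [Real.mul_rpow (by positivity)
      (Finset.sum_nonneg fun i _ => Real.rpow_nonneg (abs_nonneg _) _),
    ← Real.rpow_mul (abs_nonneg c), mul_one_div, div_self (ne_of_gt hp), Real.rpow_one]

end Aux

/-- For `p ≥ 2`, a `p`-unit vector `z` and `0 < h < γ_p(x)`, the second difference quotient of
the `p`-norm is bounded by `2(p−1)/(γ_p(x) − h)`. -/
theorem second_diff_quotient_pNorm_le {n : ℕ} (p : ℝ) (hp : 2 ≤ p)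
    (x z : Fin n → ℝ) (hz : pNorm p z = 1) (h : ℝ) (h0 : 0 < h) (hh : h < pNorm p x) :
    (pNorm p (x + h • z) + pNorm p (x - h • z) - 2 * pNorm p x) / h ^ 2 ≤
      2 * (p - 1) / (pNorm p x - h) := by
  have hp0 : 0 < p := by linarith
  have hp1 : 1 ≤ p := by linarith
  set G := pNorm p x with hGdef
  have hGh : 0 < G - h := sub_pos.2 hh
  -- the sum of |z i|^p is 1
  have hzsum : ∑ i, |z i| ^ p = 1 := by
    have h0' : 0 ≤ ∑ i, |z i| ^ p :=
      Finset.sum_nonneg fun i _ => Real.rpow_nonneg (abs_nonneg _) _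
    have hcong := congrArg (fun y : ℝ => y ^ p) hz
    simp only [pNorm] at hcong
    rwa [← Real.rpow_mul h0', one_div, inv_mul_cancel₀ (ne_of_gt hp0), Real.rpow_one,
      Real.one_rpow] at hcong
  -- the functions
  set Φ : ℝ → ℝ := fun t => ∑ i, ((x i + t * z i) ^ 2) ^ (p / 2) with hΦdef
  set Φ₁ : ℝ → ℝ := fun t =>
    ∑ i, p * ((x i + t * z i) * ((x i + t * z i) ^ 2) ^ ((p - 2) / 2)) * z i with hΦ₁def
  set Φ₂ : ℝ → ℝ := fun t =>
    ∑ i, p * ((p - 1) * ((x i + t * z i) ^ 2) ^ ((p - 2) / 2) * z i) * z i with hΦ₂def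
  set g : ℝ → ℝ := fun t => Φ t ^ (1 / p) with hgdef
  set g1 : ℝ → ℝ := fun t => Φ₁ t * (1 / p) * Φ t ^ (1 / p - 1) with hg1def
  set g2 : ℝ → ℝ := fun t =>
    Φ₂ t * (1 / p) * Φ t ^ (1 / p - 1) +
      Φ₁ t * (1 / p) * (Φ₁ t * (1 / p - 1) * Φ t ^ (1 / p - 1 - 1)) with hg2def
  -- pNorm in terms of g
  have hg_eq : ∀ t : ℝ, pNorm p (x + t • z) = g t := by
    intro t
    unfold pNorm
    rw [hgdef, hΦdef]
    congr 1
    refine Finset.sum_congr rfl fun i _ => ?_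
    simp only [Pi.add_apply, Pi.smul_apply, smul_eq_mul]
    exact abs_rpow_eq_sq_s9 _ _
  -- lower bound on g
  have hglb : ∀ t : ℝ, |t| ≤ h → G - h ≤ g t := by
    intro t ht
    have hxeq : x = (x + t • z) + (-t) • z := by
      funext i; simp only [Pi.add_apply, Pi.smul_apply, smul_eq_mul]; ring
    have h1 : G ≤ g t + |t| := by
      calc G = pNorm p ((x + t • z) + (-t) • z) := by rw [hGdef, ← hxeq]
        _ ≤ pNorm p (x + t • z) + pNorm p ((-t) • z) := pNorm_add_le hp1 _ _
        _ = g t + |t| := by rw [hg_eq, pNorm_smul hp0, hz, abs_neg, mul_one]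
    linarith
  have hΦnonneg : ∀ t : ℝ, 0 ≤ Φ t := fun t =>
    Finset.sum_nonneg fun i _ => Real.rpow_nonneg (sq_nonneg _) _
  have hΦpos : ∀ t : ℝ, |t| ≤ h → 0 < Φ t := by
    intro t ht
    rcases (hΦnonneg t).lt_or_eq with hlt | heq
    · exact hlt
    · exfalso
      have := hglb t ht
      rw [hgdef] at this
      simp only [← heq, Real.zero_rpow (by positivity : (1:ℝ)/p ≠ 0)] at this
      linarith
  -- derivatives of Φ and Φ₁
  have hui : ∀ (i : Fin n) (t : ℝ), HasDerivAt (fun t : ℝ => x i + t * z i) (z i) t :=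
    fun i t => by simpa using (hasDerivAt_mul_const (z i)).const_add (x i)
  have hΦ' : ∀ t : ℝ, HasDerivAt Φ (Φ₁ t) t := by
    intro t
    rw [hΦdef, hΦ₁def]
    exact HasDerivAt.fun_sum fun i _ => by
      have := (hasDerivAt_A hp (x i + t * z i)).comp t (hui i t); exact this
  have hΦ₁' : ∀ t : ℝ, HasDerivAt Φ₁ (Φ₂ t) t := by
    intro t
    rw [hΦ₁def, hΦ₂def]
    refine HasDerivAt.fun_sum fun i _ => ?_
    exact (((hasDerivAt_B hp (x i + t * z i)).comp t (hui i t)).const_mul p).mul_const (z i)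
  -- derivatives of g and g1 on the relevant region
  have hg' : ∀ t : ℝ, |t| ≤ h → HasDerivAt g (g1 t) t := by
    intro t ht
    have := (hΦ' t).rpow_const (p := 1 / p) (Or.inl (ne_of_gt (hΦpos t ht)))
    rw [hgdef, hg1def]
    exact this
  have hg1' : ∀ t : ℝ, |t| ≤ h → HasDerivAt g1 (g2 t) t := by
    intro t ht
    have hL : HasDerivAt (fun t => Φ₁ t * (1 / p)) (Φ₂ t * (1 / p)) t :=
      (hΦ₁' t).mul_const (1 / p)
    have hR : HasDerivAt (fun t => Φ t ^ (1 / p - 1))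
        (Φ₁ t * (1 / p - 1) * Φ t ^ (1 / p - 1 - 1)) t :=
      (hΦ' t).rpow_const (Or.inl (ne_of_gt (hΦpos t ht)))
    have := hL.mul hR
    rw [hg1def, hg2def]
    exact this
  -- Hölder bound on Φ₂
  have hΦ₂le : ∀ t : ℝ, Φ₂ t ≤ p * (p - 1) * Φ t ^ ((p - 2) / p) := by
    intro t
    have hsum : Φ₂ t = p * (p - 1) *
        ∑ i, ((x i + t * z i) ^ 2) ^ ((p - 2) / 2) * z i ^ 2 := by
      rw [hΦ₂def, Finset.mul_sum]
      exact Finset.sum_congr rfl fun i _ => by ring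
    rw [hsum]
    have hfac : 0 ≤ p * (p - 1) := by nlinarith
    refine mul_le_mul_of_nonneg_left ?_ hfac
    rcases eq_or_lt_of_le hp with hp2 | hp2
    · -- p = 2
      have he : ((p : ℝ) - 2) / 2 = 0 := by rw [← hp2]; norm_num
      have he2 : ((p : ℝ) - 2) / p = 0 := by rw [← hp2]; norm_num
      simp only [he, he2, Real.rpow_zero, one_mul]
      have : ∀ i : Fin n, (z i) ^ 2 = |z i| ^ p := by
        intro i
        rw [← hp2, abs_rpow_eq_sq_s9]
        norm_num
      simp_rw [this]
      rw [hzsum]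
    · -- p > 2
      have hpq : Real.HolderConjugate (p / (p - 2)) (p / 2) := by
        rw [Real.holderConjugate_iff]
        constructor
        · rw [lt_div_iff₀ (by linarith)]; linarith
        · rw [inv_div, inv_div]
          have hne : p ≠ 0 := ne_of_gt hp0
          field_simp
          ring
      have hH := Real.inner_le_Lp_mul_Lq_of_nonneg Finset.univ hpq
        (f := fun i => ((x i + t * z i) ^ 2) ^ ((p - 2) / 2))
        (g := fun i => (z i) ^ 2)
        (fun i _ => Real.rpow_nonneg (sq_nonneg _) _)
        (fun i _ => sq_nonneg _)
      have e1 : ∀ i : Fin n, (((x i + t * z i) ^ 2) ^ ((p - 2) / 2)) ^ (p / (p - 2)) =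
          ((x i + t * z i) ^ 2) ^ (p / 2) := by
        intro i
        rw [← Real.rpow_mul (sq_nonneg _)]
        congr 1
        have hne : p - 2 ≠ 0 := by linarith
        field_simp
      have e2 : ∀ i : Fin n, ((z i) ^ 2 : ℝ) ^ (p / 2) = |z i| ^ p := fun i =>
        (abs_rpow_eq_sq_s9 (z i) p).symm
      simp only [e1, e2] at hH
      calc ∑ i, ((x i + t * z i) ^ 2) ^ ((p - 2) / 2) * z i ^ 2
          ≤ (∑ i, ((x i + t * z i) ^ 2) ^ (p / 2)) ^ (1 / (p / (p - 2))) *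
            (∑ i, |z i| ^ p) ^ (1 / (p / 2)) := hH
        _ = Φ t ^ ((p - 2) / p) := by
            rw [hzsum, Real.one_rpow, mul_one, one_div_div]
  -- bound on g2
  have hg2le : ∀ t : ℝ, |t| ≤ h → g2 t ≤ (p - 1) / (G - h) := by
    intro t ht
    have hpos := hΦpos t ht
    have hglb' : G - h ≤ Φ t ^ (1 / p) := hglb t ht
    have hE : (0:ℝ) ≤ Φ t ^ (1 / p - 1 - 1) := Real.rpow_nonneg hpos.le _
    have hinv1 : 1 / p - 1 ≤ 0 := by
      have : 1 / p ≤ 1 := by rw [div_le_one hp0]; linarith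
      linarith
    have hterm2 : Φ₁ t * (1 / p) * (Φ₁ t * (1 / p - 1) * Φ t ^ (1 / p - 1 - 1)) ≤ 0 := by
      have hfac : (1 / p) * ((1 / p - 1) * Φ t ^ (1 / p - 1 - 1)) ≤ 0 :=
        mul_nonpos_of_nonneg_of_nonpos (by positivity)
          (mul_nonpos_of_nonpos_of_nonneg hinv1 hE)
      calc Φ₁ t * (1 / p) * (Φ₁ t * (1 / p - 1) * Φ t ^ (1 / p - 1 - 1))
          = (Φ₁ t) ^ 2 * ((1 / p) * ((1 / p - 1) * Φ t ^ (1 / p - 1 - 1))) := by ring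
        _ ≤ 0 := mul_nonpos_of_nonneg_of_nonpos (sq_nonneg _) hfac
    have hterm1 : Φ₂ t * (1 / p) * Φ t ^ (1 / p - 1) ≤ (p - 1) / (G - h) := by
      have hB : (0:ℝ) ≤ (1 / p) * Φ t ^ (1 / p - 1) := by positivity
      have h1 : Φ₂ t * (1 / p) * Φ t ^ (1 / p - 1) ≤
          (p * (p - 1) * Φ t ^ ((p - 2) / p)) * ((1 / p) * Φ t ^ (1 / p - 1)) := by
        rw [mul_assoc]
        exact mul_le_mul_of_nonneg_right (hΦ₂le t) hB
      have h2 : (p * (p - 1) * Φ t ^ ((p - 2) / p)) * ((1 / p) * Φ t ^ (1 / p - 1)) =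
          (p - 1) * Φ t ^ (-(1 / p)) := by
        have hmul : Φ t ^ ((p - 2) / p) * Φ t ^ (1 / p - 1) = Φ t ^ (-(1 / p)) := by
          rw [← Real.rpow_add hpos]
          congr 1
          field_simp
          ring
        have hpne : p ≠ 0 := ne_of_gt hp0
        calc (p * (p - 1) * Φ t ^ ((p - 2) / p)) * ((1 / p) * Φ t ^ (1 / p - 1))
            = (p - 1) * (Φ t ^ ((p - 2) / p) * Φ t ^ (1 / p - 1)) * (p * (1 / p)) := by ring
          _ = (p - 1) * Φ t ^ (-(1 / p)) := by
              rw [hmul, mul_one_div, div_self hpne, mul_one]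
      have h3 : (p - 1) * Φ t ^ (-(1 / p)) ≤ (p - 1) / (G - h) := by
        rw [Real.rpow_neg hpos.le, div_eq_mul_inv]
        refine mul_le_mul_of_nonneg_left ?_ (by linarith)
        exact inv_anti₀ hGh hglb'
      linarith
    rw [hg2def]
    linarith
  -- mean value theorem assembly
  set M := (p - 1) / (G - h) with hMdef
  have hM0 : 0 ≤ M := div_nonneg (by linarith) hGh.le
  have key : g h + g (-h) - 2 * g 0 ≤ 2 * M * h ^ 2 := by
    set ψ : ℝ → ℝ := fun t => g t + g (-t) with hψdef
    have habs : ∀ t : ℝ, t ∈ Set.Icc (0:ℝ) h → |t| ≤ h ∧ |(-t)| ≤ h := by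
      intro t ht
      constructor
      · rw [abs_of_nonneg ht.1]; exact ht.2
      · rw [abs_neg, abs_of_nonneg ht.1]; exact ht.2
    have hψ' : ∀ t : ℝ, |t| ≤ h → |(-t)| ≤ h →
        HasDerivAt ψ (g1 t - g1 (-t)) t := by
      intro t h1 h2
      have ha := hg' t h1
      have hb := (hg' (-t) h2).comp t (hasDerivAt_neg t)
      have hab := ha.add hb
      rw [hψdef]
      refine hab.congr_deriv ?_
      ring
    have hψc : ContinuousOn ψ (Set.Icc 0 h) := by
      intro t ht
      obtain ⟨h1, h2⟩ := habs t ht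
      exact ((hψ' t h1 h2).continuousAt).continuousWithinAt
    obtain ⟨c, hc, hceq⟩ := exists_hasDerivAt_eq_slope ψ (fun t => g1 t - g1 (-t)) h0 hψc
      (fun t ht => hψ' t (habs t ⟨ht.1.le, ht.2.le⟩).1 (habs t ⟨ht.1.le, ht.2.le⟩).2)
    have hcc : -c < c := by linarith [hc.1]
    have hcabs : ∀ t : ℝ, t ∈ Set.Icc (-c) c → |t| ≤ h := by
      intro t ht
      rw [abs_le]
      constructor <;> [linarith [ht.1, hc.2]; linarith [ht.2, hc.2]]
    have hg1c : ContinuousOn g1 (Set.Icc (-c) c) := fun t ht =>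
      ((hg1' t (hcabs t ht)).continuousAt).continuousWithinAt
    obtain ⟨ξ, hξ, hξeq⟩ := exists_hasDerivAt_eq_slope g1 g2 hcc hg1c
      (fun t ht => hg1' t (hcabs t ⟨ht.1.le, ht.2.le⟩))
    have hξabs : |ξ| ≤ h := hcabs ξ ⟨hξ.1.le, hξ.2.le⟩
    have hg2ξ : g2 ξ ≤ M := hg2le ξ hξabs
    -- translate
    have hslope1 : g1 c - g1 (-c) = (ψ h - ψ 0) / h := by
      rw [hceq]; norm_num
    have hslope2 : g2 ξ = (g1 c - g1 (-c)) / (2 * c) := by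
      rw [hξeq]; congr 1; ring
    have hc0 : 0 < c := hc.1
    have hch : c < h := hc.2
    have e0 : ψ h - ψ 0 = g h + g (-h) - 2 * g 0 := by
      rw [hψdef]; simp only [neg_zero]; ring
    have hstep : g1 c - g1 (-c) ≤ 2 * M * c := by
      have := hg2ξ
      rw [hslope2] at this
      have h2c : 0 < 2 * c := by linarith
      rw [div_le_iff₀ h2c] at this
      linarith [this]
    have hfin : ψ h - ψ 0 ≤ 2 * M * c * h := by
      have : (ψ h - ψ 0) / h ≤ 2 * M * c := by rw [← hslope1]; exact hstep
      calc ψ h - ψ 0 = (ψ h - ψ 0) / h * h := by field_simp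
        _ ≤ 2 * M * c * h := mul_le_mul_of_nonneg_right this h0.le
    rw [← e0]
    calc ψ h - ψ 0 ≤ 2 * M * c * h := hfin
      _ ≤ 2 * M * h ^ 2 := by
          have hMh : 0 ≤ 2 * M * h := by positivity
          nlinarith [mul_le_mul_of_nonneg_left hch.le hMh]
  -- conclusion
  have e1 : pNorm p (x + h • z) = g h := hg_eq h
  have e2 : pNorm p (x - h • z) = g (-h) := by
    rw [sub_eq_add_neg, ← neg_smul]
    exact hg_eq (-h)
  have e3 : G = g 0 := by
    have := hg_eq 0
    simp only [zero_smul, add_zero] at this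
    rw [hGdef, ← this]
  rw [div_le_iff₀ (by positivity)]
  rw [e1, e2]
  calc g h + g (-h) - 2 * G = g h + g (-h) - 2 * g 0 := by rw [e3]
    _ ≤ 2 * M * h ^ 2 := key
    _ = 2 * (p - 1) / (G - h) * h ^ 2 := by rw [hMdef]; ring
end
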